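/- A finite set B of Wang tiles admits no tiling of the plane if and only if for some m ≥ 1 the vertical transition matrix V_m is nilpotent. -/
import Mathlib

structure WangTile (p : ℕ) where
  t : Fin p
  b : Fin p
  l : Fin p
  r : Fin p
deriving DecidableEq, Fintype

def IsTiling {p : ℕ} (B : Set (WangTile p)) (f : ℤ → ℤ → WangTile p) : Prop :=
  (∀ i j, f i j ∈ B) ∧ (∀ i j, (f i j).r = (f (i + 1) j).l) ∧
    (∀ i j, (f i j).t = (f i (j + 1)).b)

def IsPeriodic {p : ℕ} (f : ℤ → ℤ → WangTile p) : Prop :=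
  ∃ m n : ℕ, 1 ≤ m ∧ 1 ≤ n ∧ ∀ i j : ℤ, f (i + (m : ℤ)) j = f i j ∧ f i (j + (n : ℤ)) = f i j

/-- Vertically-valid columns of `m` tiles of `B` (no wrap-around). -/
abbrev ColB (p m : ℕ) (B : Finset (WangTile p)) : Type :=
  {c : Fin m → WangTile p // (∀ k, c k ∈ B) ∧
    ∀ k l : Fin m, (l : ℕ) = (k : ℕ) + 1 → (c k).t = (c l).b}

/-- The vertical transition matrix of order `m`. -/
def Vmat (p m : ℕ) (B : Finset (WangTile p)) : Matrix (ColB p m B) (ColB p m B) ℝ :=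
  Matrix.of fun u v => if ∀ k : Fin m, (u.1 k).r = (v.1 k).l then 1 else 0

section aux

variable {p m : ℕ} {B : Finset (WangTile p)}

lemma Vmat_nonneg (u v : ColB p m B) : 0 ≤ Vmat p m B u v := by
  unfold Vmat; simp only [Matrix.of_apply]; split <;> norm_num

lemma Vmat_pow_nonneg : ∀ (k : ℕ) (u v : ColB p m B), 0 ≤ (Vmat p m B ^ k) u v := by
  intro k
  induction k with
  | zero => intro u v; simp only [pow_zero, Matrix.one_apply]; split <;> norm_num
  | succ n ih =>
    intro u v
    rw [pow_succ, Matrix.mul_apply]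
    exact Finset.sum_nonneg fun w _ => mul_nonneg (ih u w) (Vmat_nonneg w v)

lemma compat_of_Vmat_ne_zero {u v : ColB p m B} (h : Vmat p m B u v ≠ 0) :
    ∀ t, (u.1 t).r = (v.1 t).l := by
  unfold Vmat at h
  simp only [Matrix.of_apply] at h
  split at h
  · assumption
  · exact absurd rfl h

lemma Vmat_eq_one_of_compat {u v : ColB p m B} (h : ∀ t, (u.1 t).r = (v.1 t).l) :
    Vmat p m B u v = 1 := by
  unfold Vmat; simp only [Matrix.of_apply]; rw [if_pos h]

lemma one_le_pow_of_path (c : ℕ → ColB p m B)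
    (hc : ∀ i t, ((c i).1 t).r = ((c (i+1)).1 t).l) :
    ∀ n : ℕ, 1 ≤ (Vmat p m B ^ n) (c 0) (c n) := by
  intro n
  induction n with
  | zero => simp [Matrix.one_apply]
  | succ n ih =>
    rw [pow_succ, Matrix.mul_apply]
    have h1 : Vmat p m B (c n) (c (n+1)) = 1 := Vmat_eq_one_of_compat (hc n)
    calc (1:ℝ) = 1 * 1 := (one_mul 1).symm
    _ ≤ (Vmat p m B ^ n) (c 0) (c n) * Vmat p m B (c n) (c (n+1)) := by
        rw [h1]; exact mul_le_mul_of_nonneg_right ih zero_le_one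
    _ ≤ ∑ w, (Vmat p m B ^ n) (c 0) w * Vmat p m B w (c (n+1)) :=
        Finset.single_le_sum
          (fun w _ => mul_nonneg (Vmat_pow_nonneg n (c 0) w) (Vmat_nonneg w (c (n+1))))
          (Finset.mem_univ (c n))

lemma exists_path_of_pow_ne_zero :
    ∀ (k : ℕ) (u v : ColB p m B), (Vmat p m B ^ k) u v ≠ 0 →
      ∃ c : ℕ → ColB p m B, c 0 = u ∧ c k = v ∧
        ∀ i < k, ∀ t, ((c i).1 t).r = ((c (i+1)).1 t).l := by
  intro k
  induction k with
  | zero =>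
    intro u v h
    simp only [pow_zero, Matrix.one_apply] at h
    refine ⟨fun _ => u, rfl, ?_, by omega⟩
    split at h
    · simp [*]
    · exact absurd rfl h
  | succ n ih =>
    intro u v h
    rw [pow_succ, Matrix.mul_apply] at h
    obtain ⟨w, _, hw⟩ := Finset.exists_ne_zero_of_sum_ne_zero h
    rw [mul_ne_zero_iff] at hw
    obtain ⟨c, hc0, hcn, hcompat⟩ := ih u w hw.1
    refine ⟨fun i => if i ≤ n then c i else v, by simp [hc0], by simp, ?_⟩
    intro i hi t
    rcases Nat.lt_or_ge i n with h' | h'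
    · simp only [if_pos (by omega : i ≤ n), if_pos (by omega : i + 1 ≤ n)]
      exact hcompat i h' t
    · have hin : i = n := by omega
      subst hin
      simp only [le_refl, if_pos, if_neg (by omega : ¬ i + 1 ≤ i)]
      rw [hcn]
      exact compat_of_Vmat_ne_zero hw.2 t

end aux

theorem no_tiling_iff_Vmat_nilpotent {p : ℕ} (B : Finset (WangTile p)) :
    (¬ ∃ f : ℤ → ℤ → WangTile p, IsTiling (↑B) f) ↔
      ∃ m : ℕ, 1 ≤ m ∧ ∃ k : ℕ, 1 ≤ k ∧ Vmat p m B ^ k = 0 := by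
  constructor
  · intro hnt
    by_contra hnil
    push_neg at hnil
    apply hnt
    have hBne : B.Nonempty := by
      rcases B.eq_empty_or_nonempty with hB | hB
      · exfalso
        apply hnil 1 le_rfl 1 le_rfl
        have hE : IsEmpty (ColB p 1 B) := ⟨fun c => by simpa [hB] using c.2.1 0⟩
        rw [pow_one]
        ext u v
        exact hE.elim u
      · exact hB
    obtain ⟨d, hd⟩ := hBne
    have rect : ∀ N : ℕ, ∃ c : ℕ → ColB p (2*N+2) B,
        ∀ i < 2*N+2, ∀ t, ((c i).1 t).r = ((c (i+1)).1 t).l := by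
      intro N
      have h := hnil (2*N+2) (by omega) (2*N+2) (by omega)
      have hex : ∃ u v : ColB p (2*N+2) B, (Vmat p (2*N+2) B ^ (2*N+2)) u v ≠ 0 := by
        by_contra hc
        push_neg at hc
        exact h (by ext u v; simpa using hc u v)
      obtain ⟨u, v, huv⟩ := hex
      obtain ⟨c, -, -, hcompat⟩ := exists_path_of_pow_ne_zero _ u v huv
      exact ⟨c, fun i hi => hcompat i (by omega)⟩
    letI : TopologicalSpace (WangTile p) := ⊥
    haveI : DiscreteTopology (WangTile p) := ⟨rfl⟩
    set S : ℕ → Set (ℤ → ℤ → WangTile p) := fun N =>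
      {f | ∀ i j : ℤ, -(N:ℤ) < i → i < N → -(N:ℤ) < j → j < N →
        f i j ∈ (B : Set (WangTile p)) ∧ (f i j).r = (f (i+1) j).l ∧
        (f i j).t = (f i (j+1)).b} with hS
    have hmono : ∀ N, S (N+1) ⊆ S N := by
      intro N f hf i j h1 h2 h3 h4
      exact hf i j (by push_cast; omega) (by push_cast; omega)
        (by push_cast; omega) (by push_cast; omega)
    have hne : ∀ N, (S N).Nonempty := by
      intro N
      obtain ⟨c, hcompat⟩ := rect N
      refine ⟨fun i j => if hj : (j + (N:ℤ)).toNat < 2*N+2 then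
        (c (i + (N:ℤ)).toNat).1 ⟨(j + (N:ℤ)).toNat, hj⟩ else d, ?_⟩
      intro i j h1 h2 h3 h4
      have hb : (j + (N:ℤ)).toNat < 2*N+2 := by omega
      have hb' : (j + 1 + (N:ℤ)).toNat < 2*N+2 := by omega
      have hb1 : (j + 1 + (N:ℤ)).toNat = (j + (N:ℤ)).toNat + 1 := by omega
      have ha1 : (i + 1 + (N:ℤ)).toNat = (i + (N:ℤ)).toNat + 1 := by omega
      have haM : (i + (N:ℤ)).toNat < 2*N+2 := by omega
      refine ⟨?_, ?_, ?_⟩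
      · simp only [dif_pos hb]
        exact (c _).2.1 _
      · simp only [dif_pos hb, ha1]
        exact hcompat _ haM _
      · simp only [dif_pos hb, dif_pos hb']
        exact (c _).2.2 ⟨(j + (N:ℤ)).toNat, hb⟩ ⟨(j + 1 + (N:ℤ)).toNat, hb'⟩ hb1
    have hclosed : ∀ N, IsClosed (S N) := by
      intro N
      have hrw : S N = ⋂ (i : ℤ) (j : ℤ), (fun f : ℤ → ℤ → WangTile p =>
          ((f i j, f (i+1) j), f i (j+1))) ⁻¹'
          {x : (WangTile p × WangTile p) × WangTile p |
            -(N:ℤ) < i → i < (N:ℤ) → -(N:ℤ) < j → j < (N:ℤ) →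
            x.1.1 ∈ (B : Set (WangTile p)) ∧ x.1.1.r = x.1.2.l ∧ x.1.1.t = x.2.b} := by
        ext f
        simp only [hS, Set.mem_iInter, Set.mem_preimage, Set.mem_setOf_eq]
      rw [hrw]
      refine isClosed_iInter fun i => isClosed_iInter fun j => ?_
      have ev : ∀ a b : ℤ, Continuous fun f : ℤ → ℤ → WangTile p => f a b :=
        fun a b => (continuous_apply b).comp (continuous_apply a)
      exact (isClosed_discrete _).preimage
        (((ev i j).prodMk (ev (i+1) j)).prodMk (ev i (j+1)))
    obtain ⟨f, hf⟩ := IsCompact.nonempty_iInter_of_sequence_nonempty_isCompact_isClosed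
      S hmono hne ((hclosed 0).isCompact) hclosed
    rw [Set.mem_iInter] at hf
    have key : ∀ i j : ℤ, f i j ∈ (B : Set (WangTile p)) ∧ (f i j).r = (f (i+1) j).l ∧
        (f i j).t = (f i (j+1)).b := by
      intro i j
      have := hf (i.natAbs + j.natAbs + 2) i j (by omega) (by omega) (by omega) (by omega)
      exact this
    exact ⟨f, fun i j => (key i j).1, fun i j => (key i j).2.1, fun i j => (key i j).2.2⟩
  · rintro ⟨m, _, k, _, hV⟩ ⟨f, hfB, hfr, hft⟩
    set c : ℕ → ColB p m B := fun i =>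
      ⟨fun t => f (i : ℤ) (t : ℤ),
        ⟨fun t => hfB _ _, fun a b hab => by
          show (f (i : ℤ) ((a : ℕ) : ℤ)).t = (f (i : ℤ) ((b : ℕ) : ℤ)).b
          have hb : ((b : ℕ) : ℤ) = ((a : ℕ) : ℤ) + 1 := by exact_mod_cast hab
          rw [hb]; exact hft _ _⟩⟩ with hc
    have hcompat : ∀ i t, ((c i).1 t).r = ((c (i+1)).1 t).l := by
      intro i t
      simp only [hc]
      have := hfr (i : ℤ) (t : ℤ)
      push_cast
      exact this
    have h1 := one_le_pow_of_path c hcompat k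
    rw [hV] at h1
    simp at h1
    linarith
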